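/- Let μ be a finite nonnegative measure on [0,1] and define ψ(λ) = ∫_{[0,1]} [λ]_x μ(dx) for λ > 0, where [λ]_x = (1 - x^λ)/(1 - x) for x ∈ [0,1) and [λ]_1 = λ. Then ψ(λ) = μ({0}) + μ({1})·λ + ∫_0^∞ (1 - e^{-λ y}) ω(dy), where ω is the push-forward of the measure (1-x)^{-1} μ(dx) 1_{0<x<1} under the map x ↦ -log x. In particular ω integrates y ↦ min(y,1). -/

import Mathlib

open MeasureTheory
open scoped NNReal ENNReal

/-- The function `[λ]_x = (1 - x^λ)/(1 - x)` for `x ∈ [0,1)`, with `[λ]_1 = λ`. -/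
noncomputable def lamBr (lam x : ℝ) : ℝ := if x = 1 then lam else (1 - x ^ lam) / (1 - x)

lemma lamBr_measurable (lam : ℝ) : Measurable (lamBr lam) := by
  unfold lamBr
  apply Measurable.ite (MeasurableSet.singleton 1)
  · measurability
  · exact ((measurable_const.sub (measurable_id.pow_const lam)).div
      (measurable_const.sub measurable_id))

lemma lamBr_nonneg {lam : ℝ} (hlam : 0 < lam) {x : ℝ} (hx : x ∈ Set.Icc (0:ℝ) 1) :
    0 ≤ lamBr lam x := by
  unfold lamBr
  obtain ⟨h0, h1⟩ := hx
  split_ifs with h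
  · exact hlam.le
  · have hx1 : x < 1 := lt_of_le_of_ne h1 h
    apply div_nonneg _ (by linarith)
    have := Real.rpow_le_one h0 h1 hlam.le
    linarith

lemma lamBr_le {lam : ℝ} (hlam : 0 < lam) {x : ℝ} (hx : x ∈ Set.Icc (0:ℝ) 1) :
    lamBr lam x ≤ max 1 lam := by
  unfold lamBr
  obtain ⟨h0, h1⟩ := hx
  split_ifs with h
  · exact le_max_right _ _
  · have hx1 : x < 1 := lt_of_le_of_ne h1 h
    have hpos : (0:ℝ) < 1 - x := by linarith
    rcases le_total lam 1 with hl | hl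
    · refine le_trans ?_ (le_max_left 1 lam)
      rw [div_le_one hpos]
      have : x ^ (1:ℝ) ≤ x ^ lam := Real.rpow_le_rpow_of_exponent_ge' h0 h1 hlam.le hl
      rw [Real.rpow_one] at this
      linarith
    · refine le_trans ?_ (le_max_right 1 lam)
      rw [div_le_iff₀ hpos]
      have hb : 1 + lam * (x - 1) ≤ (1 + (x - 1)) ^ lam :=
        one_add_mul_self_le_rpow_one_add (by linarith) hl
      have : (1 + (x - 1)) = x := by ring
      rw [this] at hb
      nlinarith

/-- `min y 1 ≤ e * (1 - exp (-y))` for `y ≥ 0`. -/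
lemma min_le_exp_bound {y : ℝ} (hy : 0 ≤ y) :
    min y 1 ≤ Real.exp 1 * (1 - Real.exp (-y)) := by
  have he : (0:ℝ) < Real.exp y := Real.exp_pos y
  have hexp : Real.exp (-y) = (Real.exp y)⁻¹ := by rw [Real.exp_neg]
  rcases le_total y 1 with h | h
  · rw [min_eq_left h]
    have h1 : y + 1 ≤ Real.exp y := Real.add_one_le_exp y
    have h2 : Real.exp y ≤ Real.exp 1 := Real.exp_le_exp.mpr h
    have h3 : 1 - Real.exp (-y) = (Real.exp y - 1) / Real.exp y := by
      rw [hexp]; field_simp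
    rw [h3]
    have hq : 0 ≤ (Real.exp y - 1) / Real.exp y := div_nonneg (by linarith) he.le
    have h4 : Real.exp y * ((Real.exp y - 1) / Real.exp y)
        ≤ Real.exp 1 * ((Real.exp y - 1) / Real.exp y) :=
      mul_le_mul_of_nonneg_right h2 hq
    have h5 : Real.exp y * ((Real.exp y - 1) / Real.exp y) = Real.exp y - 1 := by
      field_simp
    linarith
  · rw [min_eq_right h]
    have h2 : Real.exp (-y) ≤ Real.exp (-1) := Real.exp_le_exp.mpr (by linarith)
    have h3 : Real.exp 1 * Real.exp (-1) = 1 := by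
      rw [← Real.exp_add]; norm_num
    have h4 : (1:ℝ) + 1 ≤ Real.exp 1 := by
      have := Real.add_one_le_exp 1; linarith
    nlinarith [mul_le_mul_of_nonneg_left h2 (Real.exp_pos 1).le]

theorem stmt3 (μ : Measure ℝ) [IsFiniteMeasure μ] (hsupp : μ (Set.Icc (0:ℝ) 1)ᶜ = 0)
    (lam : ℝ) (hlam : 0 < lam) :
    (∫ x, lamBr lam x ∂μ
      = (μ {0}).toReal + (μ {1}).toReal * lam
        + ∫ y, (1 - Real.exp (-lam * y))
            ∂(Measure.map (fun x => -Real.log x)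
              ((μ.restrict (Set.Ioo 0 1)).withDensity
                (fun x => ENNReal.ofReal (1 - x)⁻¹))))
    ∧ Integrable (fun y => min y 1)
        (Measure.map (fun x => -Real.log x)
          ((μ.restrict (Set.Ioo 0 1)).withDensity
            (fun x => ENNReal.ofReal (1 - x)⁻¹))) := by
  set ν := (μ.restrict (Set.Ioo 0 1)).withDensity (fun x => ENNReal.ofReal (1 - x)⁻¹) with hν
  have hae : ∀ᵐ x ∂μ, x ∈ Set.Icc (0:ℝ) 1 := by
    rw [MeasureTheory.ae_iff]
    exact hsupp
  -- measurability facts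
  have hmes_neg_log : Measurable (fun x : ℝ => -Real.log x) := Real.measurable_log.neg
  have hdens_meas : Measurable (fun x : ℝ => Real.toNNReal (1 - x)⁻¹) :=
    ((measurable_const.sub measurable_id).inv).real_toNNReal
  have hν_eq : ν = (μ.restrict (Set.Ioo 0 1)).withDensity
      (fun x => ((fun x : ℝ => Real.toNNReal (1 - x)⁻¹) x : ENNReal)) := rfl
  -- integrability of lamBr
  have h_int : Integrable (lamBr lam) μ := by
    refine Integrable.mono' (integrable_const (max 1 lam)) (lamBr_measurable lam).aestronglyMeasurable ?_
    filter_upwards [hae] with x hx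
    rw [Real.norm_eq_abs, abs_of_nonneg (lamBr_nonneg hlam hx)]
    exact lamBr_le hlam hx
  -- value of lamBr at 0 and on Ioo 0 1
  have h_lamBr0 : lamBr lam 0 = 1 := by
    simp [lamBr, Real.zero_rpow hlam.ne']
  have h_lamBr1 : lamBr lam 1 = lam := by simp [lamBr]
  -- first part: the integral identity
  constructor
  · -- compute the map/withDensity integral
    have hmap : (∫ y, (1 - Real.exp (-lam * y)) ∂(Measure.map (fun x => -Real.log x) ν))
        = ∫ x, (1 - Real.exp (-lam * (-Real.log x))) ∂ν := by
      refine integral_map hmes_neg_log.aemeasurable ?_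
      exact (Continuous.aestronglyMeasurable (by continuity))
    have hwd : (∫ x, (1 - Real.exp (-lam * (-Real.log x))) ∂ν)
        = ∫ x in Set.Ioo (0:ℝ) 1,
            ((Real.toNNReal (1 - x)⁻¹ : ℝ≥0) : ℝ) • (1 - Real.exp (-lam * (-Real.log x))) ∂μ := by
      rw [hν_eq, integral_withDensity_eq_integral_smul hdens_meas]
      rfl
    have hcongr : (∫ x in Set.Ioo (0:ℝ) 1,
            ((Real.toNNReal (1 - x)⁻¹ : ℝ≥0) : ℝ) • (1 - Real.exp (-lam * (-Real.log x))) ∂μ)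
        = ∫ x in Set.Ioo (0:ℝ) 1, lamBr lam x ∂μ := by
      refine setIntegral_congr_fun measurableSet_Ioo ?_
      intro x hx
      obtain ⟨hx0, hx1⟩ := hx
      have hpos : (0:ℝ) < 1 - x := by linarith
      have h1 : ((Real.toNNReal (1 - x)⁻¹ : ℝ≥0) : ℝ) = (1 - x)⁻¹ :=
        Real.coe_toNNReal _ (inv_nonneg.mpr hpos.le)
      have h2 : Real.exp (-lam * (-Real.log x)) = x ^ lam := by
        rw [Real.rpow_def_of_pos hx0]; ring_nf
      simp only [smul_eq_mul, h1, h2, lamBr, if_neg hx1.ne]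
      rw [div_eq_inv_mul]
    rw [hmap, hwd, hcongr]
    -- now split the LHS integral
    have hres : μ.restrict (Set.Icc (0:ℝ) 1) = μ := Measure.restrict_eq_self_of_ae_mem hae
    have hsplit : Set.Icc (0:ℝ) 1 = {0} ∪ ({1} ∪ Set.Ioo 0 1) := by
      ext x
      simp only [Set.mem_Icc, Set.mem_union, Set.mem_singleton_iff, Set.mem_Ioo]
      constructor
      · rintro ⟨h0, h1⟩
        rcases eq_or_lt_of_le h0 with h | h
        · exact Or.inl h.symm
        rcases eq_or_lt_of_le h1 with h' | h'
        · exact Or.inr (Or.inl h')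
        · exact Or.inr (Or.inr ⟨h, h'⟩)
      · rintro (rfl | rfl | ⟨h1, h2⟩) <;> constructor <;> linarith
    have hIoo_meas : MeasurableSet (Set.Ioo (0:ℝ) 1) := measurableSet_Ioo
    have h1m : MeasurableSet ({1} ∪ Set.Ioo (0:ℝ) 1) :=
      (MeasurableSet.singleton 1).union hIoo_meas
    have hd1 : Disjoint ({0} : Set ℝ) ({1} ∪ Set.Ioo 0 1) := by
      rw [Set.disjoint_left]
      rintro x rfl
      simp
    have hd2 : Disjoint ({1} : Set ℝ) (Set.Ioo 0 1) := by
      rw [Set.disjoint_left]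
      rintro x rfl
      simp
    calc ∫ x, lamBr lam x ∂μ = ∫ x in Set.Icc (0:ℝ) 1, lamBr lam x ∂μ := by rw [hres]
      _ = (∫ x in ({0} : Set ℝ), lamBr lam x ∂μ)
            + ∫ x in ({1} ∪ Set.Ioo (0:ℝ) 1), lamBr lam x ∂μ := by
          rw [hsplit]
          exact setIntegral_union hd1 h1m h_int.integrableOn h_int.integrableOn
      _ = (∫ x in ({0} : Set ℝ), lamBr lam x ∂μ)
            + ((∫ x in ({1} : Set ℝ), lamBr lam x ∂μ)
              + ∫ x in Set.Ioo (0:ℝ) 1, lamBr lam x ∂μ) := by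
          rw [setIntegral_union hd2 hIoo_meas h_int.integrableOn h_int.integrableOn]
      _ = (μ {0}).toReal + (μ {1}).toReal * lam + ∫ x in Set.Ioo (0:ℝ) 1, lamBr lam x ∂μ := by
          rw [integral_singleton, integral_singleton, h_lamBr0, h_lamBr1]
          simp [smul_eq_mul]
          simp only [measureReal_def]
          ring
  · -- integrability of min y 1
    rw [integrable_map_measure (Continuous.aestronglyMeasurable (by continuity))
      hmes_neg_log.aemeasurable, hν_eq,
      integrable_withDensity_iff_integrable_smul hdens_meas]
    refine Integrable.mono' (integrable_const (Real.exp 1)) ?_ ?_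
    · apply Measurable.aestronglyMeasurable
      exact (hdens_meas.coe_nnreal_real).smul
        ((hmes_neg_log.min measurable_const).comp measurable_id)
    · rw [MeasureTheory.ae_restrict_iff' measurableSet_Ioo]
      refine Filter.Eventually.of_forall ?_
      intro x hx
      obtain ⟨hx0, hx1⟩ := hx
      have hpos : (0:ℝ) < 1 - x := by linarith
      have hlog : 0 ≤ -Real.log x := by
        have := Real.log_nonpos hx0.le hx1.le
        linarith
      have h1 : ((Real.toNNReal (1 - x)⁻¹ : ℝ≥0) : ℝ) = (1 - x)⁻¹ :=
        Real.coe_toNNReal _ (inv_nonneg.mpr hpos.le)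
      have hmin_nonneg : 0 ≤ min (-Real.log x) 1 := le_min hlog zero_le_one
      simp only [Function.comp_apply, NNReal.smul_def, smul_eq_mul, Real.norm_eq_abs]
      rw [h1, abs_of_nonneg (mul_nonneg (inv_nonneg.mpr hpos.le) hmin_nonneg)]
      have hb : min (-Real.log x) 1 ≤ Real.exp 1 * (1 - Real.exp (-(-Real.log x))) :=
        min_le_exp_bound hlog
      have hexp : Real.exp (-(-Real.log x)) = x := by
        rw [neg_neg, Real.exp_log hx0]
      rw [hexp] at hb
      rw [inv_mul_le_iff₀ hpos]
      linarith
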